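/- Let t0, t1 be strings with distinct unique minimal end-of-string symbols $0 < $1 and t01 = t0 t1. For suffix positions p ≤ n0 and q > n0 of t01, writing q' = q - n0, we have: t01[p, n0+n1] ≺ t01[q, n0+n1] if and only if t0[p, n0] ⪯ t1[q', n1] in the comparison where $0 is treated as smaller than $1 and both smaller than every other symbol. In particular the multi-string BWT merge order of suffixes of t0 and t1 coincides with the suffix order in the concatenation t0 t1. -/

import Mathlib

lemma my_cons_lt_cons_iff {α : Type*} [LinearOrder α] (a b : α) (u v : List α) :
    (a :: u) < (b :: v) ↔ a < b ∨ (a = b ∧ u < v) := by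
  show List.Lex _ _ _ ↔ _
  constructor
  · intro h
    cases h with
    | rel h => exact Or.inl h
    | cons h => exact Or.inr ⟨rfl, h⟩
  · rintro (h | ⟨rfl, h⟩)
    · exact List.Lex.rel h
    · exact List.Lex.cons h

lemma my_key {α : Type*} [LinearOrder α] :
    ∀ (u v w : List α), ¬ u <+: v → ¬ v <+: u →
      (((u ++ w) < v ↔ u < v) ∧ (u ≤ v ↔ u < v))
  | [], v, w, h1, _ => absurd (List.nil_prefix) h1
  | a :: u, [], w, _, h2 => absurd (List.nil_prefix) h2
  | a :: u, b :: v, w, h1, h2 => by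
    rcases lt_trichotomy a b with hab | rfl | hab
    · simp [my_cons_lt_cons_iff, hab, le_of_lt, hab.le]
    · have h1' : ¬ u <+: v := fun h => h1 (List.cons_prefix_cons.2 ⟨rfl, h⟩)
      have h2' : ¬ v <+: u := fun h => h2 (List.cons_prefix_cons.2 ⟨rfl, h⟩)
      obtain ⟨k1, k2⟩ := my_key u v w h1' h2'
      constructor
      · simp only [List.cons_append, my_cons_lt_cons_iff, lt_irrefl, false_or, true_and, k1]
      · constructor
        · intro h
          rcases h.lt_or_eq with h' | h'
          · exact h'
          · exact absurd (List.cons_injective.eq_iff.mp h' ▸ List.prefix_refl u) h1'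
        · exact le_of_lt
    · have hlt : (b :: v) < (a :: u) := (my_cons_lt_cons_iff b a v u).2 (Or.inl hab)
      have hlt' : (b :: v) < (a :: u ++ w) := (my_cons_lt_cons_iff b a v (u ++ w)).2 (Or.inl hab)
      constructor
      · constructor
        · intro h; exact absurd (h.trans hlt') (lt_irrefl _)
        · intro h; exact absurd (h.trans hlt) (lt_irrefl _)
      · constructor
        · intro h; exact absurd (h.trans_lt' hlt) (lt_irrefl _)
        · intro h; exact absurd (h.trans hlt) (lt_irrefl _)

lemma my_getLast_mem_drop {α : Type*} (t : List α) (n : ℕ) (hn : n < t.length) (h : t ≠ []) :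
    t.getLast h ∈ t.drop n := by
  have hlen : t.length ≠ 0 := by simp [h]
  have hi : t.length - 1 - n < (t.drop n).length := by simp [List.length_drop]; omega
  have : (t.drop n)[t.length - 1 - n] = t.getLast h := by
    rw [List.getElem_drop, List.getLast_eq_getElem]
    congr 1
    omega
  rw [← this]
  exact List.getElem_mem hi

theorem concat_suffix_order' {α : Type*} [LinearOrder α] (t0 t1 : List α)
    (hend : ∃ (h0 : t0 ≠ []) (h1 : t1 ≠ []),
      t0.getLast h0 ∉ t1 ∧ t1.getLast h1 ∉ t0)
    (p q : ℕ) (hp : p < t0.length)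
    (hq0 : t0.length ≤ q) (hq : q < t0.length + t1.length) :
    (t0 ++ t1).drop p < (t0 ++ t1).drop q ↔ t0.drop p ≤ t1.drop (q - t0.length) := by
  obtain ⟨h0, h1, hm0, hm1⟩ := hend
  set s0 := t0.drop p with hs0
  set s1 := t1.drop (q - t0.length) with hs1
  have e1 : (t0 ++ t1).drop p = s0 ++ t1 := List.drop_append_of_le_length hp.le
  have e2 : (t0 ++ t1).drop q = s1 := by
    have : q = t0.length + (q - t0.length) := by omega
    rw [this, List.drop_length_add_append]
  rw [e1, e2]
  -- neither s0 <+: s1 nor s1 <+: s0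
  have hmem0 : t0.getLast h0 ∈ s0 := my_getLast_mem_drop t0 p hp h0
  have hmem1 : t1.getLast h1 ∈ s1 := my_getLast_mem_drop t1 (q - t0.length) (by omega) h1
  have hn0 : ¬ s0 <+: s1 := fun h =>
    hm0 ((List.drop_suffix _ t1).subset (h.subset hmem0))
  have hn1 : ¬ s1 <+: s0 := fun h =>
    hm1 ((List.drop_suffix _ t0).subset (h.subset hmem1))
  obtain ⟨k1, k2⟩ := my_key s0 s1 t1 hn0 hn1
  rw [k1, ← k2]



/-- `t0` and `t1` end with distinct unique end-of-string symbols `$0 < $1`,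
each strictly smaller than all other symbols occurring in either string. -/
def DistinctEndMarkers {α : Type*} [LinearOrder α] (t0 t1 : List α) : Prop :=
  ∃ (h0 : t0 ≠ []) (h1 : t1 ≠ []),
    t0.getLast h0 < t1.getLast h1 ∧
    (∀ c ∈ t0 ++ t1, c ≠ t0.getLast h0 → c ≠ t1.getLast h1 → t1.getLast h1 < c) ∧
    (∀ i (hi : i < t0.length - 1), t0[i]'(by omega) ≠ t0.getLast h0) ∧
    (∀ i (hi : i < t1.length - 1), t1[i]'(by omega) ≠ t1.getLast h1) ∧
    t0.getLast h0 ∉ t1 ∧ t1.getLast h1 ∉ t0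

/-- for a suffix position `p` in the `t0` region and `q` in the `t1`
region of `t01 = t0 ++ t1` (0-based: `p < n0`, `n0 ≤ q < n0 + n1`, `q' = q - n0`),
the suffix of `t01` at `p` is lexicographically smaller than the suffix at `q` iff
`t0[p, n0] ⪯ t1[q', n1]`. Hence the multi-string BWT merge order of the suffixes of
`t0` and `t1` coincides with the suffix order in the concatenation `t0 ++ t1`. -/
theorem concat_suffix_order {α : Type*} [LinearOrder α] (t0 t1 : List α)
    (hend : DistinctEndMarkers t0 t1)
    (p q : ℕ) (hp : p < t0.length)
    (hq0 : t0.length ≤ q) (hq : q < t0.length + t1.length) :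
    (t0 ++ t1).drop p < (t0 ++ t1).drop q ↔ t0.drop p ≤ t1.drop (q - t0.length) := by
  obtain ⟨h0, h1, _, _, _, _, hm0, hm1⟩ := hend
  exact concat_suffix_order' t0 t1 ⟨h0, h1, hm0, hm1⟩ p q hp hq0 hq
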